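/- Let S be a closed subspace of a Banach space B, E a Banach space, and u : S → E a bounded linear map with ||u|| ≤ η ≤ 1. Form the pushout P = (B ⊕₁ E)/N where B ⊕₁ E carries the norm ||(b,e)|| = ||b|| + ||e|| and N = {(s, -u(s)) : s ∈ S}. Then the map i_E : E → P, e ↦ [(0,e)], is an isometric embedding. -/
import Mathlib

open Filter Topology

variable {B E : Type*} [NormedAddCommGroup B] [NormedSpace ℝ B]
  [NormedAddCommGroup E] [NormedSpace ℝ E]

/-- The subspace `N = {(s, -u(s)) : s ∈ S}` of the ℓ¹-direct sum `B ⊕₁ E`. -/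
noncomputable def pushoutKer (S : Submodule ℝ B) (u : S →L[ℝ] E) :
    Submodule ℝ (WithLp 1 (B × E)) :=
  LinearMap.range ((WithLp.linearEquiv 1 ℝ (B × E)).symm.toLinearMap.comp
    (LinearMap.prod S.subtype (-(u : S →ₗ[ℝ] E))))

omit [NormedSpace ℝ B] [NormedSpace ℝ E] in
lemma withLp_one_norm (x : WithLp 1 (B × E)) :
    ‖x‖ = ‖(WithLp.equiv 1 (B × E) x).1‖ + ‖(WithLp.equiv 1 (B × E) x).2‖ := by
  rw [WithLp.prod_norm_eq_add (by norm_num)]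
  norm_num

/-- In the Kisliakov pushout `P = (B ⊕₁ E)/N`, `N = {(s, -u(s)) : s ∈ S}` with
`‖u‖ ≤ η ≤ 1`, the canonical map `i_E : E → P`, `e ↦ [(0,e)]`, is isometric. -/
theorem stmt_7 [CompleteSpace B] [CompleteSpace E]
    (S : Submodule ℝ B) (hS : IsClosed (S : Set B))
    (u : S →L[ℝ] E) (η : ℝ) (hη0 : 0 ≤ η) (hη1 : η ≤ 1) (hu : ‖u‖ ≤ η) :
    ∀ e : E,
      ‖(pushoutKer S u).mkQ ((WithLp.equiv 1 (B × E)).symm (0, e))‖ = ‖e‖ := by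
  intro e
  set x : WithLp 1 (B × E) := (WithLp.equiv 1 (B × E)).symm (0, e) with hx
  have hxnorm : ‖x‖ = ‖e‖ := by
    rw [withLp_one_norm]
    simp [hx]
  apply le_antisymm
  · calc ‖(pushoutKer S u).mkQ x‖ ≤ ‖x‖ := Submodule.Quotient.norm_mk_le _ _
      _ = ‖e‖ := hxnorm
  · refine le_of_forall_pos_le_add fun ε hε => ?_
    obtain ⟨m, hm, hmlt⟩ := Submodule.Quotient.norm_mk_lt ((pushoutKer S u).mkQ x) hε
    have hmem : m - x ∈ pushoutKer S u := by
      rw [← Submodule.Quotient.eq]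
      exact hm
    obtain ⟨s, hs⟩ := hmem
    have hm_eq : m = x + (WithLp.equiv 1 (B × E)).symm ((s : B), -(u s)) := by
      rw [← sub_eq_iff_eq_add', ← hs]
      rfl
    have hnorm_m : ‖m‖ = ‖(s : B)‖ + ‖e - u s‖ := by
      rw [hm_eq, withLp_one_norm]
      simp [hx, sub_eq_add_neg]
    have hus : ‖u s‖ ≤ ‖(s : B)‖ := by
      calc ‖u s‖ ≤ ‖u‖ * ‖s‖ := u.le_opNorm s
        _ ≤ 1 * ‖s‖ := by
            apply mul_le_mul_of_nonneg_right (hu.trans hη1) (norm_nonneg _)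
        _ = ‖(s : B)‖ := by rw [one_mul]; rfl
    have : ‖e‖ ≤ ‖m‖ := by
      rw [hnorm_m]
      calc ‖e‖ ≤ ‖e - u s‖ + ‖u s‖ := by
            simpa using norm_add_le (e - u s) (u s)
        _ ≤ ‖(s : B)‖ + ‖e - u s‖ := by linarith
    have hmk : Submodule.Quotient.mk m = (pushoutKer S u).mkQ x := hm
    linarith [hmlt]
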